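/- Let α ∈ ℝ and let φ be a non-negative locally integrable function satisfying: there are constants C₁,C₂,C₃,C₄>0 with C₁ ≤ φ(s)/s^{2α} ≤ C₂ for all s ≥ 1 and C₃ ≤ φ(s)/s^{2α+1} ≤ C₄ for all 0<s<1. Then there exist constants c,C>0 (depending only on C₁,C₂,C₃,C₄) such that for every non-negative measurable function h on (0,∞) and every x>0, c·E(x) ≤ H*_{α,φ}(I*h)(x) ≤ C·E(x), where E(x) = (1/x)·∫₀ˣ t·h(t)dt + ∫ₓ^∞ h(t)dt + ∫ₓ^∞ ln(t/x)·h(t)dt. -/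

import Mathlib

open MeasureTheory Set
open scoped ENNReal

/-- The quasi (adjoint) Dunkl–Hausdorff operator acting on `ℝ≥0∞`-valued functions. -/
noncomputable def dhAdjL (α : ℝ) (φ : ℝ → ℝ) (g : ℝ → ℝ≥0∞) (x : ℝ) : ℝ≥0∞ :=
  ENNReal.ofReal (x ^ (2*α)) * ∫⁻ y in Ioi (0:ℝ), ENNReal.ofReal (φ (y/x) / y ^ (2*α+1)) * g y

/-- `(I*h)(y) = ∫_y^∞ h`. -/
noncomputable def IstarL (h : ℝ → ℝ≥0∞) (y : ℝ) : ℝ≥0∞ := ∫⁻ t in Ioi y, h t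

lemma indicator_swap_aux (h : ℝ → ℝ≥0∞) (y t : ℝ) :
    (Ioi y).indicator h t = (Iio t).indicator (fun _ => h t) y := by
  by_cases h' : y < t <;> simp [Set.indicator, h']

lemma uncurry_meas (h : ℝ → ℝ≥0∞) (hm : Measurable h) :
    Measurable (Function.uncurry fun y t => (Ioi y).indicator h t) := by
  have : (Function.uncurry fun y t => (Ioi y).indicator h t)
      = ({q : ℝ × ℝ | q.1 < q.2}).indicator (fun q => h q.2) := by
    ext p
    by_cases hp : p.1 < p.2 <;> simp [Function.uncurry, Set.indicator, hp]
  rw [this]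
  exact (hm.comp measurable_snd).indicator (measurableSet_lt measurable_fst measurable_snd)

lemma log_weight (x t : ℝ) (hx : 0 < x) (ht : x < t) :
    ∫⁻ y in Ioo x t, ENNReal.ofReal (1/y) = ENNReal.ofReal (Real.log (t/x)) := by
  have hint : IntegrableOn (fun y : ℝ => 1/y) (Ioo x t) := by
    have hc : ContinuousOn (fun y : ℝ => 1/y) (Icc x t) := by
      apply ContinuousOn.div continuousOn_const continuousOn_id
      intro y hy; exact (hx.trans_le hy.1).ne'
    exact (hc.integrableOn_Icc).mono_set Ioo_subset_Icc_self
  rw [← ofReal_integral_eq_lintegral_ofReal hint]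
  · congr 1
    rw [← integral_Ioc_eq_integral_Ioo, ← intervalIntegral.integral_of_le ht.le]
    exact integral_one_div (by
      intro h0
      rcases h0 with ⟨h1, _⟩
      simp only [inf_le_iff] at h1
      rcases h1 with h1 | h1 <;> linarith)
  · filter_upwards [ae_restrict_mem measurableSet_Ioo] with y hy
    have : 0 < y := hx.trans hy.1
    positivity

/-- Tonelli computation for the inner region. -/
lemma tonelli_inner (h : ℝ → ℝ≥0∞) (hm : Measurable h) (x : ℝ) (hx : 0 < x) :
    ∫⁻ y in Ioo 0 x, IstarL h y =
      (∫⁻ t in Ioo (0:ℝ) x, ENNReal.ofReal t * h t) +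
        ENNReal.ofReal x * ∫⁻ t in Ioi x, h t := by
  simp only [IstarL]
  have step1 : ∫⁻ y in Ioo 0 x, ∫⁻ t in Ioi y, h t
      = ∫⁻ y in Ioo 0 x, ∫⁻ t in Ioi (0:ℝ), (Ioi y).indicator h t := by
    refine setLIntegral_congr_fun measurableSet_Ioo (fun y hy => ?_)
    rw [lintegral_indicator measurableSet_Ioi,
      Measure.restrict_restrict measurableSet_Ioi, Set.Ioi_inter_Ioi,
      max_eq_left hy.1.le]
  rw [step1, lintegral_lintegral_swap ((uncurry_meas h hm).aemeasurable)]
  have step2 : ∫⁻ t in Ioi (0:ℝ), ∫⁻ y in Ioo 0 x, (Ioi y).indicator h t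
      = ∫⁻ t in Ioi (0:ℝ), ENNReal.ofReal (min t x) * h t := by
    refine setLIntegral_congr_fun measurableSet_Ioi (fun t ht => ?_)
    have : ∀ y, (Ioi y).indicator h t = (Iio t).indicator (fun _ => h t) y :=
      fun y => indicator_swap_aux h y t
    simp_rw [this]
    rw [lintegral_indicator measurableSet_Iio,
      Measure.restrict_restrict measurableSet_Iio]
    have hset : Iio t ∩ Ioo 0 x = Ioo 0 (min t x) := by
      ext y; simp only [mem_inter_iff, mem_Iio, mem_Ioo, lt_min_iff]; tauto
    rw [hset, lintegral_const, Measure.restrict_apply MeasurableSet.univ,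
      Set.univ_inter, Real.volume_Ioo, sub_zero, mul_comm]
  rw [step2]
  have hsplit : Ioi (0:ℝ) = Ioc 0 x ∪ Ioi x := (Set.Ioc_union_Ioi_eq_Ioi hx.le).symm
  rw [hsplit, lintegral_union measurableSet_Ioi Set.Ioc_disjoint_Ioi_same]
  congr 1
  · rw [← setLIntegral_congr (Ioo_ae_eq_Ioc (a := (0:ℝ)) (b := x))]
    refine setLIntegral_congr_fun measurableSet_Ioo (fun t ht => ?_)
    rw [min_eq_left ht.2.le]
  · rw [← lintegral_const_mul' _ _ ENNReal.ofReal_ne_top]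
    refine setLIntegral_congr_fun measurableSet_Ioi (fun t ht => ?_)
    rw [min_eq_right (le_of_lt ht)]

/-- Tonelli computation for the outer region. -/
lemma tonelli_outer (h : ℝ → ℝ≥0∞) (hm : Measurable h) (x : ℝ) (hx : 0 < x) :
    ∫⁻ y in Ioi x, ENNReal.ofReal (1/y) * IstarL h y =
      ∫⁻ t in Ioi x, ENNReal.ofReal (Real.log (t/x)) * h t := by
  simp only [IstarL]
  have step1 : ∫⁻ y in Ioi x, ENNReal.ofReal (1/y) * ∫⁻ t in Ioi y, h t
      = ∫⁻ y in Ioi x, ∫⁻ t in Ioi x, ENNReal.ofReal (1/y) * (Ioi y).indicator h t := by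
    refine setLIntegral_congr_fun measurableSet_Ioi (fun y hy => ?_)
    rw [lintegral_const_mul' _ _ ENNReal.ofReal_ne_top,
      lintegral_indicator measurableSet_Ioi,
      Measure.restrict_restrict measurableSet_Ioi, Set.Ioi_inter_Ioi,
      max_eq_left (le_of_lt hy)]
  have hmeas : Measurable (Function.uncurry fun y t =>
      ENNReal.ofReal (1/y) * (Ioi y).indicator h t) := by
    have h1 : Measurable fun p : ℝ × ℝ => ENNReal.ofReal (1/p.1) :=
      (measurable_const.div measurable_fst).ennreal_ofReal
    exact h1.mul (uncurry_meas h hm)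
  rw [step1, lintegral_lintegral_swap hmeas.aemeasurable]
  refine setLIntegral_congr_fun measurableSet_Ioi (fun t ht => ?_)
  have hptwise : ∀ y, ENNReal.ofReal (1/y) * (Ioi y).indicator h t
      = (Iio t).indicator (fun y => ENNReal.ofReal (1/y) * h t) y := by
    intro y
    by_cases hy : y < t <;> simp [Set.indicator, hy]
  simp_rw [hptwise]
  rw [lintegral_indicator measurableSet_Iio,
    Measure.restrict_restrict measurableSet_Iio]
  have hset : Iio t ∩ Ioi x = Ioo x t := by
    rw [Set.inter_comm, Set.Ioi_inter_Iio]
  have hf : Measurable fun a : ℝ => ENNReal.ofReal (1/a) :=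
    (measurable_const.div measurable_id).ennreal_ofReal
  rw [hset, lintegral_mul_const _ hf, log_weight x t hx ht]

theorem dunklHAdj_Istar_estimate (α C₁ C₂ C₃ C₄ : ℝ)
    (hC₁ : 0 < C₁) (hC₂ : 0 < C₂) (hC₃ : 0 < C₃) (hC₄ : 0 < C₄) :
    ∃ c C : ℝ, 0 < c ∧ 0 < C ∧
      ∀ φ : ℝ → ℝ, (∀ s, 0 ≤ φ s) → LocallyIntegrableOn φ (Ioi 0) →
        (∀ s : ℝ, 1 ≤ s → C₁ ≤ φ s / s ^ (2*α) ∧ φ s / s ^ (2*α) ≤ C₂) →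
        (∀ s : ℝ, 0 < s → s < 1 → C₃ ≤ φ s / s ^ (2*α+1) ∧ φ s / s ^ (2*α+1) ≤ C₄) →
        ∀ h : ℝ → ℝ≥0∞, Measurable h → ∀ x : ℝ, 0 < x →
          ENNReal.ofReal c * (ENNReal.ofReal (1/x) * (∫⁻ t in Ioo (0:ℝ) x, ENNReal.ofReal t * h t) + (∫⁻ t in Ioi x, h t) + (∫⁻ t in Ioi x, ENNReal.ofReal (Real.log (t/x)) * h t)) ≤ dhAdjL α φ (IstarL h) x ∧
          dhAdjL α φ (IstarL h) x ≤ ENNReal.ofReal C * (ENNReal.ofReal (1/x) * (∫⁻ t in Ioo (0:ℝ) x, ENNReal.ofReal t * h t) + (∫⁻ t in Ioi x, h t) + (∫⁻ t in Ioi x, ENNReal.ofReal (Real.log (t/x)) * h t)) := by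
  refine ⟨min C₁ C₃, max C₂ C₄, lt_min hC₁ hC₃, lt_of_lt_of_le hC₂ (le_max_left _ _), ?_⟩
  intro φ hφ0 _ hout hin h hm x hx
  set B₁ := ∫⁻ t in Ioo (0:ℝ) x, ENNReal.ofReal t * h t with hB₁
  set B₂ := ∫⁻ t in Ioi x, h t with hB₂
  set B₃ := ∫⁻ t in Ioi x, ENNReal.ofReal (Real.log (t/x)) * h t with hB₃
  have hx2a : (0:ℝ) < x ^ (2*α) := Real.rpow_pos_of_pos hx _
  set Q : ℝ → ℝ≥0∞ :=
    fun y => ENNReal.ofReal (x ^ (2*α) * (φ (y/x) / y ^ (2*α+1))) * IstarL h y with hQ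
  -- splitting of the operator
  have key : dhAdjL α φ (IstarL h) x = (∫⁻ y in Ioo 0 x, Q y) + ∫⁻ y in Ioi x, Q y := by
    unfold dhAdjL
    rw [← lintegral_const_mul' _ _ ENNReal.ofReal_ne_top]
    have hpt : ∀ y : ℝ, ENNReal.ofReal (x ^ (2*α)) *
        (ENNReal.ofReal (φ (y/x) / y ^ (2*α+1)) * IstarL h y) = Q y := by
      intro y
      rw [hQ, ← mul_assoc, ← ENNReal.ofReal_mul hx2a.le]
    simp_rw [hpt]
    rw [← Set.Ioc_union_Ioi_eq_Ioi hx.le,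
      lintegral_union measurableSet_Ioi Set.Ioc_disjoint_Ioi_same]
    congr 1
    exact (setLIntegral_congr (Ioo_ae_eq_Ioc (a := (0:ℝ)) (b := x))).symm
  -- pointwise algebraic identities
  have hinQ : ∀ y ∈ Ioo (0:ℝ) x,
      x ^ (2*α) * (φ (y/x) / y ^ (2*α+1)) = (φ (y/x) / (y/x) ^ (2*α+1)) * (1/x) := by
    intro y hy
    have hy0 : 0 < y := hy.1
    rw [Real.div_rpow hy0.le hx.le]
    have h2 : y ^ (2*α+1) ≠ 0 := (Real.rpow_pos_of_pos hy0 _).ne'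
    have h3 : x ^ (2*α+1) = x ^ (2*α) * x := by rw [Real.rpow_add hx, Real.rpow_one]
    rw [h3]
    field_simp
  have houtQ : ∀ y ∈ Ioi x,
      x ^ (2*α) * (φ (y/x) / y ^ (2*α+1)) = (φ (y/x) / (y/x) ^ (2*α)) * (1/y) := by
    intro y hy
    have hy0 : 0 < y := hx.trans hy
    rw [Real.div_rpow hy0.le hx.le, Real.rpow_add hy0, Real.rpow_one]
    have h2 : y ^ (2*α) ≠ 0 := (Real.rpow_pos_of_pos hy0 _).ne'
    field_simp
  -- Tonelli identities
  have innerInt : ∫⁻ y in Ioo 0 x, IstarL h y = B₁ + ENNReal.ofReal x * B₂ :=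
    tonelli_inner h hm x hx
  have outerInt : ∫⁻ y in Ioi x, ENNReal.ofReal (1/y) * IstarL h y = B₃ :=
    tonelli_outer h hm x hx
  -- integrated bounds, inner region
  have low_in : ENNReal.ofReal (C₃ * (1/x)) * (B₁ + ENNReal.ofReal x * B₂)
      ≤ ∫⁻ y in Ioo 0 x, Q y := by
    rw [← innerInt, ← lintegral_const_mul' _ _ ENNReal.ofReal_ne_top]
    refine lintegral_mono_ae ((ae_restrict_iff' measurableSet_Ioo).2
      (ae_of_all _ fun y hy => ?_))
    rw [hQ]
    refine mul_le_mul_left (ENNReal.ofReal_le_ofReal ?_) _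
    rw [hinQ y hy]
    exact mul_le_mul_of_nonneg_right
      (hin (y/x) (div_pos hy.1 hx) ((div_lt_one hx).2 hy.2)).1 (by positivity)
  have up_in : (∫⁻ y in Ioo 0 x, Q y)
      ≤ ENNReal.ofReal (C₄ * (1/x)) * (B₁ + ENNReal.ofReal x * B₂) := by
    rw [← innerInt, ← lintegral_const_mul' _ _ ENNReal.ofReal_ne_top]
    refine lintegral_mono_ae ((ae_restrict_iff' measurableSet_Ioo).2
      (ae_of_all _ fun y hy => ?_))
    rw [hQ]
    refine mul_le_mul_left (ENNReal.ofReal_le_ofReal ?_) _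
    rw [hinQ y hy]
    exact mul_le_mul_of_nonneg_right
      (hin (y/x) (div_pos hy.1 hx) ((div_lt_one hx).2 hy.2)).2 (by positivity)
  -- integrated bounds, outer region
  have low_out : ENNReal.ofReal C₁ * B₃ ≤ ∫⁻ y in Ioi x, Q y := by
    rw [← outerInt, ← lintegral_const_mul' _ _ ENNReal.ofReal_ne_top]
    refine lintegral_mono_ae ((ae_restrict_iff' measurableSet_Ioi).2
      (ae_of_all _ fun y hy => ?_))
    rw [hQ, ← mul_assoc, ← ENNReal.ofReal_mul hC₁.le]
    refine mul_le_mul_left (ENNReal.ofReal_le_ofReal ?_) _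
    rw [houtQ y hy]
    have hy0 : 0 < y := hx.trans hy
    exact mul_le_mul_of_nonneg_right
      (hout (y/x) ((one_le_div hx).2 (le_of_lt hy))).1 (by positivity)
  have up_out : (∫⁻ y in Ioi x, Q y) ≤ ENNReal.ofReal C₂ * B₃ := by
    rw [← outerInt, ← lintegral_const_mul' _ _ ENNReal.ofReal_ne_top]
    refine lintegral_mono_ae ((ae_restrict_iff' measurableSet_Ioi).2
      (ae_of_all _ fun y hy => ?_))
    rw [hQ, ← mul_assoc, ← ENNReal.ofReal_mul hC₂.le]
    refine mul_le_mul_left (ENNReal.ofReal_le_ofReal ?_) _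
    rw [houtQ y hy]
    have hy0 : 0 < y := hx.trans hy
    exact mul_le_mul_of_nonneg_right
      (hout (y/x) ((one_le_div hx).2 (le_of_lt hy))).2 (by positivity)
  -- collecting constants
  have hcollect : ∀ c : ℝ, 0 ≤ c →
      ENNReal.ofReal (c * (1/x)) * (B₁ + ENNReal.ofReal x * B₂)
        = ENNReal.ofReal c * (ENNReal.ofReal (1/x) * B₁ + B₂) := by
    intro c hc
    rw [ENNReal.ofReal_mul hc, mul_assoc]
    congr 1
    rw [mul_add, ← mul_assoc, ← ENNReal.ofReal_mul (by positivity),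
      one_div_mul_cancel hx.ne', ENNReal.ofReal_one, one_mul]
  constructor
  · calc ENNReal.ofReal (min C₁ C₃) * (ENNReal.ofReal (1/x) * B₁ + B₂ + B₃)
        = ENNReal.ofReal (min C₁ C₃) * (ENNReal.ofReal (1/x) * B₁ + B₂)
            + ENNReal.ofReal (min C₁ C₃) * B₃ := by rw [mul_add]
      _ ≤ ENNReal.ofReal C₃ * (ENNReal.ofReal (1/x) * B₁ + B₂)
            + ENNReal.ofReal C₁ * B₃ :=
        add_le_add
          (mul_le_mul_left (ENNReal.ofReal_le_ofReal (min_le_right _ _)) _)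
          (mul_le_mul_left (ENNReal.ofReal_le_ofReal (min_le_left _ _)) _)
      _ ≤ (∫⁻ y in Ioo 0 x, Q y) + ∫⁻ y in Ioi x, Q y :=
        add_le_add (by rw [← hcollect C₃ hC₃.le]; exact low_in) low_out
      _ = dhAdjL α φ (IstarL h) x := key.symm
  · calc dhAdjL α φ (IstarL h) x
        = (∫⁻ y in Ioo 0 x, Q y) + ∫⁻ y in Ioi x, Q y := key
      _ ≤ ENNReal.ofReal C₄ * (ENNReal.ofReal (1/x) * B₁ + B₂)
            + ENNReal.ofReal C₂ * B₃ :=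
        add_le_add (by rw [← hcollect C₄ hC₄.le]; exact up_in) up_out
      _ ≤ ENNReal.ofReal (max C₂ C₄) * (ENNReal.ofReal (1/x) * B₁ + B₂)
            + ENNReal.ofReal (max C₂ C₄) * B₃ :=
        add_le_add
          (mul_le_mul_left (ENNReal.ofReal_le_ofReal (le_max_right _ _)) _)
          (mul_le_mul_left (ENNReal.ofReal_le_ofReal (le_max_left _ _)) _)
      _ = ENNReal.ofReal (max C₂ C₄) * (ENNReal.ofReal (1/x) * B₁ + B₂ + B₃) := by
        ring
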